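/- Streaming approximation error bound: Let Ẑ be a minimizer over ℝ^{d×(k+1)} of J(Z) = (1/2)‖Y − Z^T X‖_F² + (λ/2)‖Z − ZS‖_F², and let Z̃ = [Ŵ, ŵ] ∈ ℝ^{d×(k+1)} be any matrix. Assume X ∈ ℝ^{d×n} has full row rank with smallest singular value σ₁(X) > 0, each column x_i of X satisfies ‖x_i‖² ≤ Ω, λ > 0, and σ₁(I−S) denotes the smallest singular value of I − S. Then ‖Ẑ − Z̃‖_F ≤ (2/(λ·σ₁(I−S)² + σ₁(X)²)) · (√(nΩ)·‖Y − Z̃^T X‖_F + λ·‖I − S‖_F²·√(‖Ŵ‖_F² + ‖ŵ‖²)). -/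

import Mathlib

open Matrix

/-- Frobenius norm. -/
noncomputable def frob {m n : ℕ} (A : Matrix (Fin m) (Fin n) ℝ) : ℝ :=
  Real.sqrt (∑ i, ∑ j, (A i j) ^ 2)

/-- Squared Frobenius norm. -/
def frobSq {m n : ℕ} (A : Matrix (Fin m) (Fin n) ℝ) : ℝ :=
  ∑ i, ∑ j, (A i j) ^ 2

/-- Smallest singular value of `A ∈ ℝ^{d×n}`: `√(min_{‖v‖=1} ‖Aᵀv‖²)`. -/
noncomputable def sigma1 {d n : ℕ} (A : Matrix (Fin d) (Fin n) ℝ) : ℝ :=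
  Real.sqrt (⨅ v : {v : Fin d → ℝ // ∑ i, (v i) ^ 2 = 1}, ∑ j, (Matrix.vecMul v.1 A j) ^ 2)

/-- The SLL objective `J(Z) = (1/2)‖Y − ZᵀX‖_F² + (λ/2)‖Z − ZS‖_F²`. -/
noncomputable def sllJ {d n k : ℕ} (X : Matrix (Fin d) (Fin n) ℝ)
    (Y : Matrix (Fin (k + 1)) (Fin n) ℝ) (S : Matrix (Fin (k + 1)) (Fin (k + 1)) ℝ)
    (lam : ℝ) (Z : Matrix (Fin d) (Fin (k + 1)) ℝ) : ℝ :=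
  (1 / 2) * frobSq (Y - Zᵀ * X) + (lam / 2) * frobSq (Z - Z * S)

def mdot {m n : ℕ} (A B : Matrix (Fin m) (Fin n) ℝ) : ℝ :=
  ∑ i, ∑ j, A i j * B i j

lemma frobSq_nonneg {m n : ℕ} (A : Matrix (Fin m) (Fin n) ℝ) : 0 ≤ frobSq A :=
  Finset.sum_nonneg fun _ _ => Finset.sum_nonneg fun _ _ => sq_nonneg _

lemma frob_nonneg {m n : ℕ} (A : Matrix (Fin m) (Fin n) ℝ) : 0 ≤ frob A := Real.sqrt_nonneg _

lemma frob_sq {m n : ℕ} (A : Matrix (Fin m) (Fin n) ℝ) : frob A ^ 2 = frobSq A :=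
  Real.sq_sqrt (frobSq_nonneg A)

lemma frob_eq_sqrt {m n : ℕ} (A : Matrix (Fin m) (Fin n) ℝ) :
    frob A = Real.sqrt (frobSq A) := rfl

lemma frobSq_sub {m n : ℕ} (A B : Matrix (Fin m) (Fin n) ℝ) :
    frobSq (A - B) = frobSq A - 2 * mdot A B + frobSq B := by
  simp only [frobSq, mdot, Matrix.sub_apply, sub_sq, Finset.sum_add_distrib,
    Finset.sum_sub_distrib, Finset.mul_sum]
  ring_nf

lemma frobSq_add {m n : ℕ} (A B : Matrix (Fin m) (Fin n) ℝ) :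
    frobSq (A + B) = frobSq A + 2 * mdot A B + frobSq B := by
  simp only [frobSq, mdot, Matrix.add_apply, add_sq, Finset.sum_add_distrib, Finset.mul_sum]
  ring_nf

lemma mdot_le {m n : ℕ} (A B : Matrix (Fin m) (Fin n) ℝ) : mdot A B ≤ frob A * frob B := by
  have h := Real.sum_mul_le_sqrt_mul_sqrt (Finset.univ : Finset (Fin m × Fin n))
    (fun p => A p.1 p.2) (fun p => B p.1 p.2)
  simpa [mdot, frob, Fintype.sum_prod_type] using h

lemma neg_mdot_le {m n : ℕ} (A B : Matrix (Fin m) (Fin n) ℝ) :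
    -(frob A * frob B) ≤ mdot A B := by
  have h := mdot_le A (-B)
  have h2 : mdot A (-B) = -mdot A B := by simp [mdot]
  have h3 : frob (-B) = frob B := by simp [frob]
  rw [h2, h3] at h
  linarith

lemma frobSq_mul_le {m p q : ℕ} (A : Matrix (Fin m) (Fin p) ℝ) (B : Matrix (Fin p) (Fin q) ℝ) :
    frobSq (A * B) ≤ frobSq A * frobSq B := by
  have h1 : frobSq (A * B) ≤ ∑ i, ∑ j, (∑ r, (A i r) ^ 2) * (∑ r, (B r j) ^ 2) := by
    apply Finset.sum_le_sum; intro i _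
    apply Finset.sum_le_sum; intro j _
    simpa [Matrix.mul_apply] using
      Finset.sum_mul_sq_le_sq_mul_sq Finset.univ (fun r => A i r) (fun r => B r j)
  calc frobSq (A * B) ≤ ∑ i, ∑ j, (∑ r, (A i r) ^ 2) * (∑ r, (B r j) ^ 2) := h1
    _ = (∑ i, ∑ r, (A i r) ^ 2) * (∑ j, ∑ r, (B r j) ^ 2) := by rw [Finset.sum_mul_sum]
    _ = frobSq A * frobSq B := by
        rw [frobSq, frobSq, Finset.sum_comm (f := fun r j => (B r j) ^ 2)]

lemma frob_mul_le {m p q : ℕ} (A : Matrix (Fin m) (Fin p) ℝ) (B : Matrix (Fin p) (Fin q) ℝ) :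
    frob (A * B) ≤ frob A * frob B := by
  rw [frob_eq_sqrt, frob_eq_sqrt, frob_eq_sqrt, ← Real.sqrt_mul (frobSq_nonneg A)]
  exact Real.sqrt_le_sqrt (frobSq_mul_le A B)

lemma frob_transpose {m n : ℕ} (A : Matrix (Fin m) (Fin n) ℝ) : frob Aᵀ = frob A := by
  unfold frob
  rw [Finset.sum_comm]
  rfl

lemma sigma1_sq_mul_le {d n : ℕ} (A : Matrix (Fin d) (Fin n) ℝ) (v : Fin d → ℝ) :
    sigma1 A ^ 2 * (∑ i, (v i) ^ 2) ≤ ∑ j, (Matrix.vecMul v A j) ^ 2 := by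
  set f : {v : Fin d → ℝ // ∑ i, (v i) ^ 2 = 1} → ℝ :=
    fun u => ∑ j, (Matrix.vecMul u.1 A j) ^ 2 with hf
  have hnn : ∀ u, 0 ≤ f u := fun u => Finset.sum_nonneg fun _ _ => sq_nonneg _
  have hinf0 : 0 ≤ ⨅ u, f u := Real.iInf_nonneg hnn
  have hs : sigma1 A ^ 2 = ⨅ u, f u := Real.sq_sqrt hinf0
  rcases eq_or_lt_of_le (Finset.sum_nonneg fun i _ => sq_nonneg (v i)) with hc | hc
  · rw [← hc, mul_zero]
    exact Finset.sum_nonneg fun _ _ => sq_nonneg _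
  · set c := ∑ i, (v i) ^ 2
    have hcs : Real.sqrt c > 0 := Real.sqrt_pos.mpr hc
    set u : Fin d → ℝ := fun i => v i / Real.sqrt c with hu
    have husq : ∑ i, (u i) ^ 2 = 1 := by
      simp only [hu, div_pow, Real.sq_sqrt hc.le]
      rw [← Finset.sum_div, div_self hc.ne']
    have hvm : ∀ j, Matrix.vecMul u A j = Matrix.vecMul v A j / Real.sqrt c := by
      intro j
      simp [hu, Matrix.vecMul, dotProduct, div_mul_eq_mul_div, Finset.sum_div]
    have hle : (⨅ u, f u) ≤ f ⟨u, husq⟩ := by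
      apply ciInf_le ⟨0, ?_⟩
      rintro x ⟨u', rfl⟩; exact hnn u'
    have hfu : f ⟨u, husq⟩ = (∑ j, (Matrix.vecMul v A j) ^ 2) / c := by
      simp only [hf]
      rw [Finset.sum_div]
      apply Finset.sum_congr rfl
      intro j _
      rw [hvm j, div_pow, Real.sq_sqrt hc.le]
    rw [hs]
    calc (⨅ u, f u) * c ≤ ((∑ j, (Matrix.vecMul v A j) ^ 2) / c) * c := by
          apply mul_le_mul_of_nonneg_right _ hc.le
          rw [← hfu]; exact hle
      _ = ∑ j, (Matrix.vecMul v A j) ^ 2 := div_mul_cancel₀ _ hc.ne'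

lemma sigma1_transpose_mul {d n k : ℕ} (X : Matrix (Fin d) (Fin n) ℝ)
    (Δ : Matrix (Fin d) (Fin k) ℝ) :
    sigma1 X ^ 2 * frobSq Δ ≤ frobSq (Δᵀ * X) := by
  have h : ∀ j t, (Δᵀ * X) j t = Matrix.vecMul (fun r => Δ r j) X t := by
    intro j t; simp [Matrix.mul_apply, Matrix.vecMul, dotProduct]
  have he : frobSq (Δᵀ * X) = ∑ j, ∑ t, (Matrix.vecMul (fun r => Δ r j) X t) ^ 2 := by
    apply Finset.sum_congr rfl; intro j _; apply Finset.sum_congr rfl; intro t _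
    rw [h]
  rw [he, frobSq, Finset.sum_comm, Finset.mul_sum]
  exact Finset.sum_le_sum fun j _ => sigma1_sq_mul_le X (fun r => Δ r j)

lemma sigma1_mul_right {d k : ℕ} (M : Matrix (Fin k) (Fin k) ℝ)
    (Δ : Matrix (Fin d) (Fin k) ℝ) :
    sigma1 M ^ 2 * frobSq Δ ≤ frobSq (Δ * M) := by
  have h : ∀ i j, (Δ * M) i j = Matrix.vecMul (Δ i) M j := by
    intro i j; simp [Matrix.mul_apply, Matrix.vecMul, dotProduct]
  have he : frobSq (Δ * M) = ∑ i, ∑ j, (Matrix.vecMul (Δ i) M j) ^ 2 := by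
    apply Finset.sum_congr rfl; intro i _; apply Finset.sum_congr rfl; intro j _
    rw [h]
  rw [he, frobSq, Finset.mul_sum]
  exact Finset.sum_le_sum fun i _ => sigma1_sq_mul_le M (Δ i)

/-- Streaming approximation error bound (Theorem 2). -/
theorem stmt_10 {d n k : ℕ} (X : Matrix (Fin d) (Fin n) ℝ)
    (Y : Matrix (Fin (k + 1)) (Fin n) ℝ) (S : Matrix (Fin (k + 1)) (Fin (k + 1)) ℝ)
    (lam Om : ℝ) (hlam : 0 < lam)
    (hrank : X.rank = d) (hσ : 0 < sigma1 X)
    (hOm : ∀ i : Fin n, ∑ r, (X r i) ^ 2 ≤ Om)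
    (What : Matrix (Fin d) (Fin k) ℝ) (what : Fin d → ℝ)
    -- `Z̃ = [Ŵ, ŵ]` is the concatenation of `Ŵ` with the column `ŵ`
    (Zt : Matrix (Fin d) (Fin (k + 1)) ℝ)
    (hZt : Zt = Matrix.of fun r => Fin.snoc (fun j => What r j) (what r))
    -- `Ẑ` is a minimizer of `J`
    (Zhat : Matrix (Fin d) (Fin (k + 1)) ℝ)
    (hmin : ∀ Z, sllJ X Y S lam Zhat ≤ sllJ X Y S lam Z) :
    frob (Zhat - Zt)
      ≤ (2 / (lam * sigma1 (1 - S) ^ 2 + sigma1 X ^ 2)) *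
        (Real.sqrt ((n : ℝ) * Om) * frob (Y - Ztᵀ * X)
          + lam * frob (1 - S) ^ 2 * Real.sqrt (frobSq What + ∑ i, (what i) ^ 2)) := by
  set Δ := Zhat - Zt with hΔ
  have hZhat : Zhat = Zt + Δ := by rw [hΔ]; abel
  -- Frobenius norm of Zt
  have hZtnorm : Real.sqrt (frobSq What + ∑ i, (what i) ^ 2) = frob Zt := by
    rw [frob_eq_sqrt]; congr 1
    rw [frobSq, frobSq, ← Finset.sum_add_distrib]
    apply Finset.sum_congr rfl
    intro r _
    rw [hZt]
    simp [Fin.sum_univ_castSucc]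
  -- expansion identities
  have e1 : Y - Zhatᵀ * X = (Y - Ztᵀ * X) - Δᵀ * X := by
    rw [hZhat, Matrix.transpose_add, Matrix.add_mul]; abel
  have e2 : Zhat - Zhat * S = (Zt - Zt * S) + (Δ - Δ * S) := by
    rw [hZhat, Matrix.add_mul]; abel
  have h1 := hmin Zt
  rw [sllJ, sllJ, e1, e2, frobSq_sub, frobSq_add] at h1
  set m₁ := mdot (Y - Ztᵀ * X) (Δᵀ * X) with hm1
  set m₂ := mdot (Zt - Zt * S) (Δ - Δ * S) with hm2
  have key : (1 / 2) * frobSq (Δᵀ * X) + (lam / 2) * frobSq (Δ - Δ * S)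
      ≤ m₁ - lam * m₂ := by linarith [h1]
  -- rewrite with (1 - S)
  have eS : ∀ M : Matrix (Fin d) (Fin (k + 1)) ℝ, M - M * S = M * (1 - S) := by
    intro M; rw [Matrix.mul_sub, Matrix.mul_one]
  -- upper bounds
  set t := frob Δ with ht
  have ht0 : 0 ≤ t := frob_nonneg Δ
  have hXb : frob X ≤ Real.sqrt ((n : ℝ) * Om) := by
    rw [frob_eq_sqrt]
    apply Real.sqrt_le_sqrt
    rw [frobSq, Finset.sum_comm]
    calc (∑ i : Fin n, ∑ r, (X r i) ^ 2) ≤ ∑ i : Fin n, Om :=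
          Finset.sum_le_sum fun i _ => hOm i
      _ = (n : ℝ) * Om := by simp [Finset.sum_const, mul_comm]
  have hm1b : m₁ ≤ Real.sqrt ((n : ℝ) * Om) * frob (Y - Ztᵀ * X) * t := by
    calc m₁ ≤ frob (Y - Ztᵀ * X) * frob (Δᵀ * X) := mdot_le _ _
      _ ≤ frob (Y - Ztᵀ * X) * (t * Real.sqrt ((n : ℝ) * Om)) := by
          apply mul_le_mul_of_nonneg_left _ (frob_nonneg _)
          calc frob (Δᵀ * X) ≤ frob Δᵀ * frob X := frob_mul_le _ _
            _ = t * frob X := by rw [frob_transpose]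
            _ ≤ t * Real.sqrt ((n : ℝ) * Om) := mul_le_mul_of_nonneg_left hXb ht0
      _ = Real.sqrt ((n : ℝ) * Om) * frob (Y - Ztᵀ * X) * t := by ring
  have hm2b : -m₂ ≤ frob Zt * frob (1 - S) ^ 2 * t := by
    calc -m₂ ≤ frob (Zt - Zt * S) * frob (Δ - Δ * S) := by
          have := neg_mdot_le (Zt - Zt * S) (Δ - Δ * S); linarith
      _ ≤ (frob Zt * frob (1 - S)) * (t * frob (1 - S)) := by
          apply mul_le_mul
          · rw [eS]; exact frob_mul_le _ _
          · rw [eS]; exact frob_mul_le _ _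
          · exact frob_nonneg _
          · exact mul_nonneg (frob_nonneg _) (frob_nonneg _)
      _ = frob Zt * frob (1 - S) ^ 2 * t := by ring
  -- lower bounds
  have hlow1 : sigma1 X ^ 2 * t ^ 2 ≤ frobSq (Δᵀ * X) := by
    rw [frob_sq]; exact sigma1_transpose_mul X Δ
  have hlow2 : sigma1 (1 - S) ^ 2 * t ^ 2 ≤ frobSq (Δ - Δ * S) := by
    rw [frob_sq, eS]; exact sigma1_mul_right (1 - S) Δ
  -- combine
  set C := lam * sigma1 (1 - S) ^ 2 + sigma1 X ^ 2 with hC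
  set B := Real.sqrt ((n : ℝ) * Om) * frob (Y - Ztᵀ * X)
      + lam * frob (1 - S) ^ 2 * Real.sqrt (frobSq What + ∑ i, (what i) ^ 2) with hB
  have hCpos : 0 < C := by
    have h1' : 0 < sigma1 X ^ 2 := pow_pos hσ 2
    have h2' : 0 ≤ lam * sigma1 (1 - S) ^ 2 := mul_nonneg hlam.le (sq_nonneg _)
    rw [hC]; linarith
  have hB0 : 0 ≤ B := by
    apply add_nonneg
    · exact mul_nonneg (Real.sqrt_nonneg _) (frob_nonneg _)
    · exact mul_nonneg (mul_nonneg hlam.le (sq_nonneg _)) (Real.sqrt_nonneg _)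
  have hmain : C * t ^ 2 ≤ 2 * B * t := by
    have h2 : (1 / 2) * (sigma1 X ^ 2 * t ^ 2) + (lam / 2) * (sigma1 (1 - S) ^ 2 * t ^ 2)
        ≤ m₁ - lam * m₂ := by
      refine le_trans ?_ key
      have ha := mul_le_mul_of_nonneg_left hlow2 (by linarith : (0:ℝ) ≤ lam / 2)
      have hb := mul_le_mul_of_nonneg_left hlow1 (by norm_num : (0:ℝ) ≤ 1 / 2)
      linarith
    have h3 : m₁ - lam * m₂ ≤ B * t := by
      have hc := mul_le_mul_of_nonneg_left hm2b hlam.le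
      rw [hB, hZtnorm]
      have : (Real.sqrt ((n : ℝ) * Om) * frob (Y - Ztᵀ * X)
          + lam * frob (1 - S) ^ 2 * frob Zt) * t
        = Real.sqrt ((n : ℝ) * Om) * frob (Y - Ztᵀ * X) * t
          + lam * (frob Zt * frob (1 - S) ^ 2 * t) := by ring
      rw [this]
      linarith [hm1b, hc]
    calc C * t ^ 2
        = 2 * ((1 / 2) * (sigma1 X ^ 2 * t ^ 2) + (lam / 2) * (sigma1 (1 - S) ^ 2 * t ^ 2)) := by
          rw [hC]; ring
      _ ≤ 2 * (m₁ - lam * m₂) := mul_le_mul_of_nonneg_left h2 (by norm_num)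
      _ ≤ 2 * (B * t) := mul_le_mul_of_nonneg_left h3 (by norm_num)
      _ = 2 * B * t := by ring
  rcases eq_or_lt_of_le ht0 with h0 | h0
  · rw [← h0]
    exact mul_nonneg (div_nonneg (by norm_num) hCpos.le) hB0
  · have hCt : C * t ≤ 2 * B := by
      have hmm : C * t * t ≤ 2 * B * t := by rw [show C * t * t = C * t ^ 2 by ring]; exact hmain
      exact (mul_le_mul_iff_of_pos_right h0).mp hmm
    rw [div_mul_eq_mul_div, le_div_iff₀ hCpos]
    linarith [hCt]
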